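/- Let T be a nontrivial finite group, I an infinite index set, G = ∏_{i ∈ I} T, and F a nonprincipal ultrafilter on I. Then the subgroup T_F = {(t_i) ∈ G : {i : t_i = 1} ∈ F} is a proper subgroup of finite index in G that is dense in the product topology on G (where T carries the discrete topology). -/

import Mathlib

/-- The subgroup of the product `∀ i, T` determined by an ultrafilter `F` on `I`:
all tuples `(t_i)` such that `{i | t_i = 1} ∈ F`. -/
def ultraSubgroup (I : Type*) (T : Type*) [Group T] (F : Ultrafilter I) :
    Subgroup (∀ _ : I, T) where
  carrier := {f | {i | f i = 1} ∈ F}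
  one_mem' := by
    simp only [Set.mem_setOf_eq, Pi.one_apply]
    exact Filter.univ_mem' fun i => trivial
  mul_mem' := by
    intro a b ha hb
    refine Filter.mem_of_superset (Filter.inter_mem ha hb) ?_
    rintro i ⟨hia, hib⟩
    simp only [Set.mem_setOf_eq] at *
    simp [hia, hib]
  inv_mem' := by
    intro a ha
    refine Filter.mem_of_superset ha ?_
    intro i hi
    simp only [Set.mem_setOf_eq] at *
    simp [hi]

instance ultraSubgroup_normal (I : Type*) (T : Type*) [Group T] (F : Ultrafilter I) :
    (ultraSubgroup I T F).Normal := by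
  constructor
  intro a ha g
  refine Filter.mem_of_superset ha ?_
  intro i hi
  simp only [Set.mem_setOf_eq] at *
  simp [hi]

/-- For a nontrivial finite group `T`, an infinite set `I`, and a
nonprincipal ultrafilter `F` on `I`, the subgroup `T_F` of `G = ∀ i, T` is a proper
subgroup of finite index which is dense for the product topology (with `T` discrete). -/
theorem stmt_1 {I : Type*} [Infinite I] (T : Type*) [Group T] [Finite T] [Nontrivial T]
    [TopologicalSpace T] [DiscreteTopology T]
    (F : Ultrafilter I) (hF : ∀ i : I, F ≠ (pure i : Ultrafilter I)) :
    ultraSubgroup I T F ≠ ⊤ ∧ (ultraSubgroup I T F).FiniteIndex ∧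
      Dense (ultraSubgroup I T F : Set (∀ _ : I, T)) := by
  classical
  have hcof : (F : Filter I) ≤ Filter.cofinite := by
    rcases Ultrafilter.le_cofinite_or_eq_pure F with h | ⟨a, ha⟩
    · exact h
    · exact absurd ha (hF a)
  refine ⟨?_, ?_, ?_⟩
  · intro h
    obtain ⟨t, ht⟩ := exists_ne (1 : T)
    have hmem : (fun _ : I => t) ∈ ultraSubgroup I T F := h ▸ Subgroup.mem_top _
    have hmem' : {i : I | t = 1} ∈ F := hmem
    rw [show {i : I | t = 1} = ∅ by simp [ht]] at hmem'
    exact Filter.empty_notMem (F : Filter I) hmem'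
  · have hsurj : Function.Surjective
        (fun t : T => QuotientGroup.mk (s := ultraSubgroup I T F) (fun _ : I => t)) := by
      intro q
      obtain ⟨f, rfl⟩ := QuotientGroup.mk_surjective q
      have huniv : (⋃ t ∈ (Set.univ : Set T), {i : I | f i = t}) ∈ F :=
        Filter.univ_mem' fun i => by simp
      obtain ⟨t, -, ht⟩ :=
        (Ultrafilter.finite_biUnion_mem_iff Set.finite_univ).mp huniv
      refine ⟨t, (QuotientGroup.eq).mpr (Filter.mem_of_superset ht ?_)⟩
      intro i hi
      simp only [Set.mem_setOf_eq] at *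
      simp [hi]
    haveI : Finite ((∀ _ : I, T) ⧸ ultraSubgroup I T F) := Finite.of_surjective _ hsurj
    exact Subgroup.finiteIndex_of_finite_quotient
  · rw [dense_iff_inter_open]
    rintro U hU ⟨f, hf⟩
    obtain ⟨s, u, hu, hsub⟩ := isOpen_pi_iff.mp hU f hf
    refine ⟨fun i => if i ∈ s then f i else 1, ?_, ?_⟩
    · apply hsub
      intro i hi
      simp only [Set.mem_setOf_eq]
      rw [if_pos (Finset.mem_coe.mp hi)]
      exact (hu i hi).2
    · show {i : I | (if i ∈ s then f i else 1) = 1} ∈ F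
      refine Filter.mem_of_superset (hcof (s.finite_toSet.compl_mem_cofinite)) ?_
      intro i hi
      simp only [Set.mem_compl_iff, Finset.mem_coe] at hi
      simp [hi]
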